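/- Let k ∈ ℝ³ be nonzero and let t be a trace-free real symmetric 3×3 matrix with Σ_{i,j} k_i k_j t_{ij} = 0. Then there exists a trace-free real symmetric 3×3 matrix φ with σ_k(rot₂)(φ) = t. Conversely, for every trace-free symmetric φ the matrix σ_k(rot₂)(φ) is trace-free symmetric and satisfies Σ_{i,j} k_i k_j (σ_k(rot₂)(φ))_{ij} = 0. (Exactness of the symbol sequence of the Hamiltonian complex at the slot S₀² → div₁div₂.) -/
import Mathlib


open scoped BigOperators

/-- The Levi-Civita symbol `ε_{ijk}` on three indices. -/
def eps : Fin 3 → Fin 3 → Fin 3 → ℝ := fun i j k =>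
  if (i, j, k) = ((0 : Fin 3), (1 : Fin 3), (2 : Fin 3)) ∨
     (i, j, k) = ((1 : Fin 3), (2 : Fin 3), (0 : Fin 3)) ∨
     (i, j, k) = ((2 : Fin 3), (0 : Fin 3), (1 : Fin 3)) then 1
  else if (i, j, k) = ((2 : Fin 3), (1 : Fin 3), (0 : Fin 3)) ∨
     (i, j, k) = ((1 : Fin 3), (0 : Fin 3), (2 : Fin 3)) ∨
     (i, j, k) = ((0 : Fin 3), (2 : Fin 3), (1 : Fin 3)) then -1
  else 0

/-- The Kronecker delta `δ_{ij}`. -/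
def kdelta (i j : Fin 3) : ℝ := if i = j then 1 else 0

/-- The cross product on `ℝ³`: `(a × b)_i = Σ_{j,l} ε_{ijl} a_j b_l`. -/
def cross (a b : Fin 3 → ℝ) : Fin 3 → ℝ := fun i => ∑ j, ∑ l, eps i j l * a j * b l

/-- The symbol of `rot₂`:
`(σ_k(rot₂)(h))_{ij} = Σ_{ℓ,m} ( ε_{iℓm} k_ℓ h_{mj} + ε_{jℓm} k_ℓ h_{mi} )`. -/
def sigRot2 (k : Fin 3 → ℝ) (h : Fin 3 → Fin 3 → ℝ) : Fin 3 → Fin 3 → ℝ :=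
  fun i j => ∑ l, ∑ m, (eps i l m * k l * h m j + eps j l m * k l * h m i)

/-- exactness of the symbol sequence of the Hamiltonian complex at the
slot `S₀² → div₁div₂`: for `k ≠ 0`, every trace-free symmetric `t` with
`Σ_{i,j} k_i k_j t_{ij} = 0` is `σ_k(rot₂)(φ)` for some trace-free symmetric `φ`;
conversely every `σ_k(rot₂)(φ)` is trace-free symmetric with vanishing `k k`-contraction. -/

lemma eps_000 : eps 0 0 0 = 0 := rfl
lemma eps_001 : eps 0 0 1 = 0 := rfl
lemma eps_002 : eps 0 0 2 = 0 := rfl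
lemma eps_010 : eps 0 1 0 = 0 := rfl
lemma eps_011 : eps 0 1 1 = 0 := rfl
lemma eps_012 : eps 0 1 2 = 1 := rfl
lemma eps_020 : eps 0 2 0 = 0 := rfl
lemma eps_021 : eps 0 2 1 = -1 := rfl
lemma eps_022 : eps 0 2 2 = 0 := rfl
lemma eps_100 : eps 1 0 0 = 0 := rfl
lemma eps_101 : eps 1 0 1 = 0 := rfl
lemma eps_102 : eps 1 0 2 = -1 := rfl
lemma eps_110 : eps 1 1 0 = 0 := rfl
lemma eps_111 : eps 1 1 1 = 0 := rfl
lemma eps_112 : eps 1 1 2 = 0 := rfl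
lemma eps_120 : eps 1 2 0 = 1 := rfl
lemma eps_121 : eps 1 2 1 = 0 := rfl
lemma eps_122 : eps 1 2 2 = 0 := rfl
lemma eps_200 : eps 2 0 0 = 0 := rfl
lemma eps_201 : eps 2 0 1 = 1 := rfl
lemma eps_202 : eps 2 0 2 = 0 := rfl
lemma eps_210 : eps 2 1 0 = -1 := rfl
lemma eps_211 : eps 2 1 1 = 0 := rfl
lemma eps_212 : eps 2 1 2 = 0 := rfl
lemma eps_220 : eps 2 2 0 = 0 := rfl
lemma eps_221 : eps 2 2 1 = 0 := rfl
lemma eps_222 : eps 2 2 2 = 0 := rfl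

lemma fmk0 (h : (0:Nat) < 3) : (⟨0, h⟩ : Fin 3) = (0 : Fin 3) := rfl
lemma fmk1 (h : (1:Nat) < 3) : (⟨1, h⟩ : Fin 3) = (1 : Fin 3) := rfl
lemma fmk2 (h : (2:Nat) < 3) : (⟨2, h⟩ : Fin 3) = (2 : Fin 3) := rfl

set_option maxHeartbeats 4000000 in
theorem stmt13 (k : Fin 3 → ℝ) (hk : k ≠ 0) :
    (∀ t : Fin 3 → Fin 3 → ℝ, (∀ i j, t i j = t j i) → (∑ i, t i i) = 0 →
      (∑ i, ∑ j, k i * k j * t i j) = 0 →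
      ∃ φ : Fin 3 → Fin 3 → ℝ, (∀ i j, φ i j = φ j i) ∧ (∑ i, φ i i) = 0 ∧
        ∀ i j, sigRot2 k φ i j = t i j) ∧
    (∀ φ : Fin 3 → Fin 3 → ℝ, (∀ i j, φ i j = φ j i) → (∑ i, φ i i) = 0 →
      (∀ i j, sigRot2 k φ i j = sigRot2 k φ j i) ∧ (∑ i, sigRot2 k φ i i) = 0 ∧
        (∑ i, ∑ j, k i * k j * sigRot2 k φ i j) = 0) := by
  have h0 : k 0 ≠ 0 ∨ k 1 ≠ 0 ∨ k 2 ≠ 0 := by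
    by_contra h
    push_neg at h
    exact hk (funext fun i => by fin_cases i <;> simp [h.1, h.2.1, h.2.2])
  have hNpos : (0:ℝ) < k 0^2 + k 1^2 + k 2^2 := by
    rcases h0 with h | h | h <;> positivity
  have hc : (4*(k 0^2 + k 1^2 + k 2^2)^2) * (4*(k 0^2 + k 1^2 + k 2^2)^2)⁻¹ = 1 :=
    mul_inv_cancel₀ (by positivity)
  constructor
  · intro t hsym htr hkk
    simp only [Fin.sum_univ_three] at hkk htr
    rw [hsym 1 0, hsym 2 0, hsym 2 1] at hkk
    refine ⟨fun i j =>
      (![![((2) * k 2 * k 2 * k 2 * t 0 1 + (-2) * k 1 * k 2 * k 2 * t 0 2 + (2) * k 1 * k 1 * k 2 * t 0 1 + (-2) * k 1 * k 1 * k 1 * t 0 2 + (6) * k 0 * k 2 * k 2 * t 1 2 + (-6) * k 0 * k 1 * k 2 * t 2 2 + (6) * k 0 * k 1 * k 2 * t 1 1 + (-6) * k 0 * k 1 * k 1 * t 1 2 + (8) * k 0 * k 0 * k 2 * t 0 1 + (-8) * k 0 * k 0 * k 1 * t 0 2), ((1) * k 2 * k 2 * k 2 * t 1 1 + (-1) *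 k 2 * k 2 * k 2 * t 0 0 + (2) * k 1 * k 2 * k 2 * t 1 2 + (-3) * k 1 * k 1 * k 2 * t 2 2 + (4) * k 1 * k 1 * k 2 * t 1 1 + (-1) * k 1 * k 1 * k 2 * t 0 0 + (-4) * k 1 * k 1 * k 1 * t 1 2 + (-2) * k 0 * k 2 * k 2 * t 0 2 + (-2) * k 0 * k 1 * k 1 * t 0 2 + (3) * k 0 * k 0 * k 2 * t 2 2 + (1) * k 0 * k 0 * k 2 * t 1 1 + (-4) * k 0 * k 0 * k 2 * t 0 0 + (2) * k 0 * k 0 * k 1 * t 1 2 + (4) * k 0 * k 0 * k 0 * t 0 2), ((4) * k 2 * k 2 * k 2 * t 1 2 + (-4) * k 1 * k 2 * k 2 * t 2 2 + (3) * k 1 * k 2 * k 2 * t 1 1 + (1) * k 1 * k 2 * k 2 * t 0 0 + (-2) * k 1 * k 1 * k 2 * t 1 2 + (-1) * k 1 * k 1 * k 1 * t 2 2 + (1) * k 1 * k 1 * k 1 * t 0 0 + (2) * k 0 * k 2 * k 2 * t 0 1 + (2) * k 0 * k 1 * k 1 * t 0 1 + (-2) * k 0 * k 0 * k 2 * t 1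 2 + (-1) * k 0 * k 0 * k 1 * t 2 2 + (-3) * k 0 * k 0 * k 1 * t 1 1 + (4) * k 0 * k 0 * k 1 * t 0 0 + (-4) * k 0 * k 0 * k 0 * t 0 1)],
         ![((1) * k 2 * k 2 * k 2 * t 1 1 + (-1) * k 2 * k 2 * k 2 * t 0 0 + (2) * k 1 * k 2 * k 2 * t 1 2 + (-3) * k 1 * k 1 * k 2 * t 2 2 + (4) * k 1 * k 1 * k 2 * t 1 1 + (-1) * k 1 * k 1 * k 2 * t 0 0 + (-4) * k 1 * k 1 * k 1 * t 1 2 + (-2) * k 0 * k 2 * k 2 * t 0 2 + (-2) * k 0 * k 1 * k 1 * t 0 2 + (3) * k 0 * k 0 * k 2 * t 2 2 + (1) * k 0 * k 0 * k 2 * t 1 1 + (-4) * k 0 * k 0 * k 2 * t 0 0 + (2) * k 0 * k 0 * k 1 * t 1 2 + (4) * k 0 * k 0 * k 0 * t 0 2), ((-2) * k 2 * k 2 * k 2 * t 0 1 + (-6) * k 1 * k 2 * k 2 * t 0 2 + (-8) * k 1 * k 1 * k 2 * t 0 1 + (2) * k 0 * k 2 * k 2 * t 1 2 + (6) * k 0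 * k 1 * k 2 * t 2 2 + (-6) * k 0 * k 1 * k 2 * t 0 0 + (8) * k 0 * k 1 * k 1 * t 1 2 + (-2) * k 0 * k 0 * k 2 * t 0 1 + (6) * k 0 * k 0 * k 1 * t 0 2 + (2) * k 0 * k 0 * k 0 * t 1 2), ((-4) * k 2 * k 2 * k 2 * t 0 2 + (-2) * k 1 * k 2 * k 2 * t 0 1 + (2) * k 1 * k 1 * k 2 * t 0 2 + (4) * k 1 * k 1 * k 1 * t 0 1 + (4) * k 0 * k 2 * k 2 * t 2 2 + (-1) * k 0 * k 2 * k 2 * t 1 1 + (-3) * k 0 * k 2 * k 2 * t 0 0 + (1) * k 0 * k 1 * k 1 * t 2 2 + (-4) * k 0 * k 1 * k 1 * t 1 1 + (3) * k 0 * k 1 * k 1 * t 0 0 + (2) * k 0 * k 0 * k 2 * t 0 2 + (-2) * k 0 * k 0 * k 1 * t 0 1 + (1) * k 0 * k 0 * k 0 * t 2 2 + (-1) * k 0 * k 0 * k 0 * t 1 1)],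
         ![((4) * k 2 * k 2 * k 2 * t 1 2 + (-4) * k 1 * k 2 * k 2 * t 2 2 + (3) * k 1 * k 2 * k 2 * t 1 1 + (1) * k 1 * k 2 * k 2 * t 0 0 + (-2) * k 1 * k 1 * k 2 * t 1 2 + (-1) * k 1 * k 1 * k 1 * t 2 2 + (1) * k 1 * k 1 * k 1 * t 0 0 + (2) * k 0 * k 2 * k 2 * t 0 1 + (2) * k 0 * k 1 * k 1 * t 0 1 + (-2) * k 0 * k 0 * k 2 * t 1 2 + (-1) * k 0 * k 0 * k 1 * t 2 2 + (-3) * k 0 * k 0 * k 1 * t 1 1 + (4) * k 0 * k 0 * k 1 * t 0 0 + (-4) * k 0 * k 0 * k 0 * t 0 1), ((-4) * k 2 * k 2 * k 2 * t 0 2 + (-2) * k 1 * k 2 * k 2 * t 0 1 + (2) * k 1 * k 1 * k 2 * t 0 2 + (4) * k 1 * k 1 * k 1 * t 0 1 + (4) * k 0 * k 2 * k 2 * t 2 2 + (-1) * k 0 * k 2 * k 2 * t 1 1 + (-3) * k 0 * k 2 * k 2 * t 0 0 + (1) * k 0 * k 1 * k 1 * t 2 2 + (-4) * k 0 * k 1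 * k 1 * t 1 1 + (3) * k 0 * k 1 * k 1 * t 0 0 + (2) * k 0 * k 0 * k 2 * t 0 2 + (-2) * k 0 * k 0 * k 1 * t 0 1 + (1) * k 0 * k 0 * k 0 * t 2 2 + (-1) * k 0 * k 0 * k 0 * t 1 1), ((8) * k 1 * k 2 * k 2 * t 0 2 + (6) * k 1 * k 1 * k 2 * t 0 1 + (2) * k 1 * k 1 * k 1 * t 0 2 + (-8) * k 0 * k 2 * k 2 * t 1 2 + (-6) * k 0 * k 1 * k 2 * t 1 1 + (6) * k 0 * k 1 * k 2 * t 0 0 + (-2) * k 0 * k 1 * k 1 * t 1 2 + (-6) * k 0 * k 0 * k 2 * t 0 1 + (2) * k 0 * k 0 * k 1 * t 0 2 + (-2) * k 0 * k 0 * k 0 * t 1 2)]] i j) * (4*(k 0^2 + k 1^2 + k 2^2)^2)⁻¹, ?_, ?_, ?_⟩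
    · intro i j
      fin_cases i <;> fin_cases j <;> simp [fmk0, fmk1, fmk2, Matrix.cons_val_zero, Matrix.cons_val_one, Matrix.cons_val_two, Matrix.head_cons, Matrix.tail_cons]
    · simp only [Fin.sum_univ_three, fmk0, fmk1, fmk2, Matrix.cons_val_zero, Matrix.cons_val_one, Matrix.cons_val_two, Matrix.head_cons, Matrix.tail_cons]
      ring
    · intro i j
      fin_cases i <;> fin_cases j <;>
        simp only [sigRot2, Fin.sum_univ_three, eps_000, eps_001, eps_002, eps_010, eps_011, eps_012, eps_020, eps_021, eps_022, eps_100, eps_101, eps_102, eps_110, eps_111, eps_112, eps_120, eps_121, eps_122, eps_200, eps_201, eps_202, eps_210, eps_211, eps_212, eps_220, eps_221, eps_222, fmk0, fmk1, fmk2, Matrix.cons_val_zero, Matrix.cons_val_one, Matrix.cons_val_two, Matrix.head_cons, Matrix.tail_cons]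
      · linear_combination (t 0 0) * hc + ((2*(1:ℝ)*(k 0^2+k 1^2+k 2^2) - 6*k 0*k 0) * (4*(k 0^2 + k 1^2 + k 2^2)^2)⁻¹) * hkk + ((2*(k 0^2+k 1^2+k 2^2)*k 0*k 0 - 2*(1:ℝ)*(k 0^2+k 1^2+k 2^2)^2) * (4*(k 0^2 + k 1^2 + k 2^2)^2)⁻¹) * htr
      · linear_combination (t 0 1) * hc + ((2*(0:ℝ)*(k 0^2+k 1^2+k 2^2) - 6*k 0*k 1) * (4*(k 0^2 + k 1^2 + k 2^2)^2)⁻¹) * hkk + ((2*(k 0^2+k 1^2+k 2^2)*k 0*k 1 - 2*(0:ℝ)*(k 0^2+k 1^2+k 2^2)^2) * (4*(k 0^2 + k 1^2 + k 2^2)^2)⁻¹) * htr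
      · linear_combination (t 0 2) * hc + ((2*(0:ℝ)*(k 0^2+k 1^2+k 2^2) - 6*k 0*k 2) * (4*(k 0^2 + k 1^2 + k 2^2)^2)⁻¹) * hkk + ((2*(k 0^2+k 1^2+k 2^2)*k 0*k 2 - 2*(0:ℝ)*(k 0^2+k 1^2+k 2^2)^2) * (4*(k 0^2 + k 1^2 + k 2^2)^2)⁻¹) * htr
      · linear_combination (t 0 1) * hc + ((2*(0:ℝ)*(k 0^2+k 1^2+k 2^2) - 6*k 1*k 0) * (4*(k 0^2 + k 1^2 + k 2^2)^2)⁻¹) * hkk + ((2*(k 0^2+k 1^2+k 2^2)*k 1*k 0 - 2*(0:ℝ)*(k 0^2+k 1^2+k 2^2)^2) * (4*(k 0^2 + k 1^2 + k 2^2)^2)⁻¹) * htr - (1:ℝ) * hsym 1 0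
      · linear_combination (t 1 1) * hc + ((2*(1:ℝ)*(k 0^2+k 1^2+k 2^2) - 6*k 1*k 1) * (4*(k 0^2 + k 1^2 + k 2^2)^2)⁻¹) * hkk + ((2*(k 0^2+k 1^2+k 2^2)*k 1*k 1 - 2*(1:ℝ)*(k 0^2+k 1^2+k 2^2)^2) * (4*(k 0^2 + k 1^2 + k 2^2)^2)⁻¹) * htr
      · linear_combination (t 1 2) * hc + ((2*(0:ℝ)*(k 0^2+k 1^2+k 2^2) - 6*k 1*k 2) * (4*(k 0^2 + k 1^2 + k 2^2)^2)⁻¹) * hkk + ((2*(k 0^2+k 1^2+k 2^2)*k 1*k 2 - 2*(0:ℝ)*(k 0^2+k 1^2+k 2^2)^2) * (4*(k 0^2 + k 1^2 + k 2^2)^2)⁻¹) * htr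
      · linear_combination (t 0 2) * hc + ((2*(0:ℝ)*(k 0^2+k 1^2+k 2^2) - 6*k 2*k 0) * (4*(k 0^2 + k 1^2 + k 2^2)^2)⁻¹) * hkk + ((2*(k 0^2+k 1^2+k 2^2)*k 2*k 0 - 2*(0:ℝ)*(k 0^2+k 1^2+k 2^2)^2) * (4*(k 0^2 + k 1^2 + k 2^2)^2)⁻¹) * htr - (1:ℝ) * hsym 2 0
      · linear_combination (t 1 2) * hc + ((2*(0:ℝ)*(k 0^2+k 1^2+k 2^2) - 6*k 2*k 1) * (4*(k 0^2 + k 1^2 + k 2^2)^2)⁻¹) * hkk + ((2*(k 0^2+k 1^2+k 2^2)*k 2*k 1 - 2*(0:ℝ)*(k 0^2+k 1^2+k 2^2)^2) * (4*(k 0^2 + k 1^2 + k 2^2)^2)⁻¹) * htr - (1:ℝ) * hsym 2 1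
      · linear_combination (t 2 2) * hc + ((2*(1:ℝ)*(k 0^2+k 1^2+k 2^2) - 6*k 2*k 2) * (4*(k 0^2 + k 1^2 + k 2^2)^2)⁻¹) * hkk + ((2*(k 0^2+k 1^2+k 2^2)*k 2*k 2 - 2*(1:ℝ)*(k 0^2+k 1^2+k 2^2)^2) * (4*(k 0^2 + k 1^2 + k 2^2)^2)⁻¹) * htr
  · intro φ hsym htr
    refine ⟨?_, ?_, ?_⟩
    · intro i j
      simp only [sigRot2]
      exact Finset.sum_congr rfl fun l _ => Finset.sum_congr rfl fun m _ => add_comm _ _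
    · simp only [sigRot2, Fin.sum_univ_three, eps_000, eps_001, eps_002, eps_010, eps_011, eps_012, eps_020, eps_021, eps_022, eps_100, eps_101, eps_102, eps_110, eps_111, eps_112, eps_120, eps_121, eps_122, eps_200, eps_201, eps_202, eps_210, eps_211, eps_212, eps_220, eps_221, eps_222]
      linear_combination (2*k 1)*(hsym 2 0) + (2*k 2)*(hsym 0 1) + (2*k 0)*(hsym 1 2)
    · simp only [sigRot2, Fin.sum_univ_three, eps_000, eps_001, eps_002, eps_010, eps_011, eps_012, eps_020, eps_021, eps_022, eps_100, eps_101, eps_102, eps_110, eps_111, eps_112, eps_120, eps_121, eps_122, eps_200, eps_201, eps_202, eps_210, eps_211, eps_212, eps_220, eps_221, eps_222]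
      ring
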